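/- If ww is a square factor of the infinite Fibonacci word, then |w| = f_m for some m ≥ 0; conversely, for every m ≥ 0 there exists a square factor ww of the Fibonacci word with |w| = f_m. -/

import Mathlib

/-- Finite Fibonacci words: `fibF 0 = a`, `fibF 1 = ab`,
`fibF (m+2) = fibF (m+1) ++ fibF m`, with letters `a = false`, `b = true`.
Each `fibF m` is a prefix of the next, so a word is a factor of the infinite
Fibonacci word `𝔽` iff it is a factor (infix) of some `fibF m`. -/
def fibF : ℕ → List Bool
  | 0 => [false]
  | 1 => [false, true]
  | n + 2 => fibF (n + 1) ++ fibF n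

/-- A word is a factor of the infinite Fibonacci word. -/
def IsFactorF (w : List Bool) : Prop := ∃ m, w <:+: fibF m

/-- The prefix `𝔽[1,n]` of the infinite Fibonacci word of length `n`
(`fibF n` has length `fib (n+2) ≥ n`). -/
def fibPrefix (n : ℕ) : List Bool := (fibF n).take n

namespace FibSq
open List

/-- The Fibonacci morphism: a = false ↦ ab, b = true ↦ a. -/
def sub : List Bool → List Bool
  | [] => []
  | false :: l => false :: true :: sub l
  | true :: l => false :: sub l

theorem sub_append : ∀ x y : List Bool, sub (x ++ y) = sub x ++ sub y
  | [], y => rfl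
  | false :: x, y => by simp [sub, sub_append x y]
  | true :: x, y => by simp [sub, sub_append x y]

theorem sub_fib : ∀ m, sub (fibF m) = fibF (m + 1)
  | 0 => rfl
  | 1 => rfl
  | (m+2) => by
      show sub (fibF (m+1) ++ fibF m) = fibF (m+2) ++ fibF (m+1)
      rw [sub_append, sub_fib (m+1), sub_fib m]

theorem sub_head?_ne_true : ∀ l : List Bool, (sub l).head? ≠ some true := by
  intro l; cases l with
  | nil => simp [sub]
  | cons c l => cases c <;> simp [sub]

theorem sub_eq_nil_iff {l : List Bool} : sub l = [] ↔ l = [] := by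
  cases l with
  | nil => simp [sub]
  | cons c l => cases c <;> simp [sub]

theorem sub_inj : ∀ {x y : List Bool}, sub x = sub y → x = y
  | [], [] , _ => rfl
  | [], c :: y, h => by
      exfalso; cases c <;> simp [sub] at h
  | c :: x, [], h => by
      exfalso; cases c <;> simp [sub] at h
  | false :: x, false :: y, h => by
      simp only [sub, List.cons.injEq] at h
      rw [sub_inj h.2.2]
  | true :: x, true :: y, h => by
      simp only [sub, List.cons.injEq] at h
      rw [sub_inj h.2]
  | false :: x, true :: y, h => by
      exfalso
      simp only [sub, List.cons.injEq] at h
      have := sub_head?_ne_true y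
      rw [← h.2] at this; simp at this
  | true :: x, false :: y, h => by
      exfalso
      simp only [sub, List.cons.injEq] at h
      have := sub_head?_ne_true x
      rw [h.2] at this; simp at this

theorem fibF_cons : ∀ m, ∃ t, fibF m = false :: t
  | 0 => ⟨[], rfl⟩
  | 1 => ⟨[true], rfl⟩
  | (m+2) => by
      obtain ⟨t, ht⟩ := fibF_cons (m+1)
      exact ⟨t ++ fibF m, by show fibF (m+1) ++ fibF m = _; rw [ht]; rfl⟩

theorem fibF_ne_nil (m : ℕ) : fibF m ≠ [] := by
  obtain ⟨t, ht⟩ := fibF_cons m; simp [ht]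

theorem fibF_succ_eq (m : ℕ) : ∃ z, z ≠ [] ∧ fibF (m + 1) = fibF m ++ z := by
  match m with
  | 0 => exact ⟨[true], by simp, rfl⟩
  | (m+1) => exact ⟨fibF m, fibF_ne_nil m, rfl⟩

theorem fibF_prefix (m : ℕ) : fibF m <+: fibF (m + 1) := by
  obtain ⟨z, _, hz⟩ := fibF_succ_eq m; exact ⟨z, hz.symm⟩

theorem mono {w : List Bool} {m : ℕ} (h : w <:+: fibF m) : w <:+: fibF (m + 1) :=
  h.trans (fibF_prefix m).isInfix

theorem mono_prefix {w : List Bool} {m : ℕ} (h : w <+: fibF m) : w <+: fibF (m + 1) :=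
  h.trans (fibF_prefix m)

theorem nobb_sub : ∀ (S x y : List Bool), sub S ≠ x ++ [true, true] ++ y := by
  intro S
  induction S with
  | nil => intro x y h; simp [sub] at h
  | cons c S ih =>
    intro x y h
    cases c with
    | false =>
      cases x with
      | nil => simp [sub] at h
      | cons d x' =>
        simp only [sub, List.cons_append, List.cons.injEq] at h
        cases x' with
        | nil =>
          simp at h
          exact sub_head?_ne_true S (by rw [h.2]; rfl)
        | cons e x'' =>
          simp at h
          exact ih x'' y (by simpa using h.2.2)
    | true =>
      cases x with
      | nil => simp [sub] at h
      | cons d x' =>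
        simp only [sub, List.cons_append, List.cons.injEq] at h
        exact ih x' y h.2

theorem no_bb : ∀ m, ¬ ([true, true] <:+: fibF m) := by
  intro m h
  obtain ⟨x, y, hxy⟩ := h
  match m with
  | 0 =>
    have := congrArg List.length hxy
    simp [fibF] at this; omega
  | (m+1) =>
    rw [← sub_fib m] at hxy
    exact nobb_sub (fibF m) x y hxy.symm

theorem noaaa_sub : ∀ (S x y : List Bool),
    sub S = x ++ [false, false, false] ++ y → [true, true] <:+: S := by
  intro S
  induction S with
  | nil => intro x y h; simp [sub] at h
  | cons c S ih =>
    intro x y h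
    cases c with
    | false =>
      cases x with
      | nil => simp [sub] at h
      | cons d x' =>
        simp only [sub, List.cons_append, List.cons.injEq] at h
        cases x' with
        | nil => simp at h
        | cons e x'' =>
          simp at h
          exact (ih x'' y (by simpa using h.2.2)).trans (by exact ⟨[false], [], by simp⟩)
    | true =>
      cases x with
      | nil =>
        simp only [sub, List.nil_append, List.cons.injEq] at h
        cases S with
        | nil => simp [sub] at h
        | cons e S' =>
          cases e with
          | false => simp [sub] at h
          | true => exact ⟨[], S', by simp⟩
      | cons d x' =>
        simp only [sub, List.cons_append, List.cons.injEq] at h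
        exact (ih x' y (by simpa using h.2)).trans ⟨[true], [], by simp⟩

theorem no_aaa : ∀ m, ¬ ([false, false, false] <:+: fibF m) := by
  intro m h
  obtain ⟨x, y, hxy⟩ := h
  match m with
  | 0 =>
    have := congrArg List.length hxy
    simp [fibF] at this; omega
  | (m+1) =>
    rw [← sub_fib m] at hxy
    exact no_bb m (noaaa_sub (fibF m) x y hxy.symm)

theorem concat_inj : ∀ {x y : List Bool} {a b : Bool}, x ++ [a] = y ++ [b] → x = y ∧ a = b := by
  intro x y a b h
  have := List.append_inj' h rfl
  refine ⟨this.1, by simpa using this.2⟩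

theorem sub_last_false {V z : List Bool} (h : sub V = z ++ [false]) :
    ∃ r, V = r ++ [true] ∧ sub r = z := by
  rcases List.eq_nil_or_concat V with rfl | ⟨r, c, rfl⟩
  · simp [sub] at h
  · rw [List.concat_eq_append] at *
    cases c with
    | false =>
      rw [sub_append] at h
      have : (sub r ++ [false]) ++ [true] = z ++ [false] := by simpa [sub] using h
      exact absurd (concat_inj this).2 (by simp)
    | true =>
      rw [sub_append] at h
      have : sub r ++ [false] = z ++ [false] := by simpa [sub] using h
      exact ⟨r, rfl, (concat_inj this).1⟩

theorem sub_last_true {V z : List Bool} (h : sub V = z ++ [true]) :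
    ∃ r, V = r ++ [false] ∧ z = sub r ++ [false] := by
  rcases List.eq_nil_or_concat V with rfl | ⟨r, c, rfl⟩
  · simp [sub] at h
  · rw [List.concat_eq_append] at *
    cases c with
    | false =>
      rw [sub_append] at h
      have : (sub r ++ [false]) ++ [true] = z ++ [true] := by simpa [sub] using h
      exact ⟨r, rfl, ((concat_inj this).1).symm⟩
    | true =>
      rw [sub_append] at h
      have : sub r ++ [false] = z ++ [true] := by simpa [sub] using h
      exact absurd (concat_inj this).2 (by simp)

theorem sub_len_le : ∀ V : List Bool, V.length ≤ (sub V).length := by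
  intro V; induction V with
  | nil => simp
  | cons c V ih => cases c <;> simp [sub] <;> omega

theorem sub_len_lt : ∀ V : List Bool, true ∈ sub V → V.length < (sub V).length := by
  intro V; induction V with
  | nil => simp [sub]
  | cons c V ih =>
    intro h
    cases c with
    | false =>
      have := sub_len_le V
      simp [sub]; omega
    | true =>
      simp [sub] at h ⊢
      have := ih h
      omega

/-- Prefix synchronization. -/
theorem SP : ∀ (S t r : List Bool), sub S = t ++ r → t ≠ [] →
    (t.getLast? = some true ∨ r.head? ≠ some true) →
    ∃ T R, S = T ++ R ∧ sub T = t := by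
  intro S
  induction S with
  | nil =>
    intro t r h ht _
    rw [show sub [] = [] from rfl] at h
    exact absurd (List.append_eq_nil_iff.mp h.symm).1 ht
  | cons c S ih =>
    intro t r h ht hcond
    cases c with
    | true =>
      rw [show sub (true :: S) = false :: sub S from rfl] at h
      cases t with
      | nil => exact absurd rfl ht
      | cons d t' =>
        simp only [List.cons_append, List.cons.injEq] at h
        cases t' with
        | nil =>
          exact ⟨[true], S, rfl, by simp [sub, h.1]⟩
        | cons e t'' =>
          obtain ⟨T, R, hTR, hsub⟩ := ih (e :: t'') r h.2 (by simp)
            (by rcases hcond with h1 | h2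
                · left; simpa using h1
                · right; exact h2)
          exact ⟨true :: T, R, by rw [hTR]; rfl, by simp [sub, hsub, h.1]⟩
    | false =>
      rw [show sub (false :: S) = false :: true :: sub S from rfl] at h
      cases t with
      | nil => exact absurd rfl ht
      | cons d t' =>
        simp only [List.cons_append, List.cons.injEq] at h
        cases t' with
        | nil =>
          -- t = [d] = [false], r = true :: sub S
          exfalso
          rcases hcond with h1 | h2
          · rw [← h.1] at h1; simp at h1
          · exact h2 (by rw [show r = true :: sub S by simpa using h.2.symm]; rfl)
        | cons e t'' =>
          simp only [List.cons_append, List.cons.injEq] at h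
          cases t'' with
          | nil =>
            exact ⟨[false], S, rfl, by simp [sub, h.1, h.2.1, h.2.2.symm]⟩
          | cons f t''' =>
            obtain ⟨T, R, hTR, hsub⟩ := ih (f :: t''') r h.2.2 (by simp)
              (by rcases hcond with h1 | h2
                  · left; simpa using h1
                  · right; exact h2)
            exact ⟨false :: T, R, by rw [hTR]; rfl,
              by simp [sub, hsub, h.1, h.2.1]⟩

/-- Interior synchronization. -/
theorem SYNC : ∀ (S l t r : List Bool), sub S = l ++ t ++ r → t.head? = some false →
    (t.getLast? = some true ∨ r.head? ≠ some true) →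
    ∃ T, T <:+: S ∧ sub T = t := by
  intro S
  induction S with
  | nil =>
    intro l t r h hh _
    rw [show sub [] = [] from rfl] at h
    obtain ⟨h1, -⟩ := List.append_eq_nil_iff.mp h.symm
    obtain ⟨-, h3⟩ := List.append_eq_nil_iff.mp h1
    rw [h3] at hh; simp at hh
  | cons c S ih =>
    intro l t r h hh hcond
    cases l with
    | nil =>
      obtain ⟨T, R, hTR, hsub⟩ := SP (c :: S) t r (by simpa using h)
        (by intro h0; rw [h0] at hh; simp at hh) hcond
      exact ⟨T, ⟨[], R, by simp [hTR]⟩, hsub⟩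
    | cons d l' =>
      cases c with
      | true =>
        rw [show sub (true :: S) = false :: sub S from rfl] at h
        simp only [List.cons_append, List.cons.injEq] at h
        obtain ⟨T, hT, hsub⟩ := ih l' t r h.2 hh hcond
        exact ⟨T, List.infix_cons hT, hsub⟩
      | false =>
        rw [show sub (false :: S) = false :: true :: sub S from rfl] at h
        simp only [List.cons_append, List.cons.injEq] at h
        cases l' with
        | nil =>
          exfalso
          -- t ++ r = true :: sub S, t head = false
          cases t with
          | nil => simp at hh
          | cons e t' =>
            have h2 : true :: sub S = e :: (t' ++ r) := by simpa using h.2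
            injection h2 with h2a _
            rw [← h2a] at hh; simp at hh
        | cons e l'' =>
          simp only [List.cons_append, List.cons.injEq] at h
          obtain ⟨T, hT, hsub⟩ := ih l'' t r h.2.2 hh hcond
          exact ⟨T, List.infix_cons hT, hsub⟩

/-- Splitting an image at a block boundary. -/
theorem SPLIT : ∀ (T u v : List Bool), sub T = u ++ v → (v.head? = some false ∨ v = []) →
    ∃ U V, T = U ++ V ∧ sub U = u ∧ sub V = v := by
  intro T
  induction T with
  | nil =>
    intro u v h hv
    obtain ⟨h1, h2⟩ := List.append_eq_nil_iff.mp ((show sub [] = [] from rfl) ▸ h).symm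
    exact ⟨[], [], by simp [h1, h2], by simp [h1, sub], by simp [h2, sub]⟩
  | cons c T ih =>
    intro u v h hv
    cases u with
    | nil => exact ⟨[], c :: T, by simp, rfl, by simpa using h⟩
    | cons d u' =>
      cases c with
      | true =>
        rw [show sub (true :: T) = false :: sub T from rfl] at h
        simp only [List.cons_append, List.cons.injEq] at h
        obtain ⟨U, V, hUV, hsU, hsV⟩ := ih u' v h.2 hv
        exact ⟨true :: U, V, by rw [hUV]; rfl, by simp [sub, hsU, h.1], hsV⟩
      | false =>
        rw [show sub (false :: T) = false :: true :: sub T from rfl] at h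
        simp only [List.cons_append, List.cons.injEq] at h
        cases u' with
        | nil =>
          -- u = [false]: v = true :: sub T, contradicting hv
          exfalso
          have h2 : v = true :: sub T := by simpa using h.2.symm
          rcases hv with h1 | h1
          · rw [h2] at h1; simp at h1
          · rw [h1] at h2; simp at h2
        | cons e u'' =>
          simp only [List.cons_append, List.cons.injEq] at h
          obtain ⟨U, V, hUV, hsU, hsV⟩ := ih u'' v h.2.2 hv
          exact ⟨false :: U, V, by rw [hUV]; rfl, by simp [sub, hsU, h.1, h.2.1], hsV⟩

/-- Right extension of a factor. -/
theorem RE {m : ℕ} {w : List Bool} (h : w <:+: fibF m) :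
    ∃ (c : Bool) (x y : List Bool), fibF (m + 1) = x ++ (w ++ [c]) ++ y := by
  obtain ⟨x, y, hxy⟩ := h
  obtain ⟨z, hz, hz2⟩ := fibF_succ_eq m
  cases y with
  | nil =>
    cases z with
    | nil => exact absurd rfl hz
    | cons z0 z' =>
      refine ⟨z0, x, z', ?_⟩
      rw [hz2, ← hxy]; simp
  | cons y0 y' =>
    refine ⟨y0, x, y' ++ z, ?_⟩
    rw [hz2, ← hxy]; simp

theorem rot_exists {l l' : List Bool} (h : l ~r l') : ∃ p q, l = p ++ q ∧ l' = q ++ p := by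
  obtain ⟨n, hn⟩ := h
  rcases Nat.eq_zero_or_pos l.length with h0 | h0
  · have hl : l = [] := List.length_eq_zero_iff.mp h0
    subst hl
    exact ⟨[], [], rfl, by simpa using hn.symm⟩
  · refine ⟨l.take (n % l.length), l.drop (n % l.length), (List.take_append_drop _ _).symm, ?_⟩
    rw [← hn, ← List.rotate_mod]
    exact List.rotate_eq_drop_append_take (Nat.le_of_lt (Nat.mod_lt _ h0))

theorem glast (l : List Bool) (a : Bool) : (l ++ [a]).getLast? = some a :=
  List.getLast?_concat

/-- Pattern `b v a v b` cannot occur (for `v ≠ []` it is impossible; conclusion: `v = []`). -/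
theorem Qp (m : ℕ) (v : List Bool)
    (h : ([true] ++ v ++ [false] ++ v ++ [true]) <:+: fibF m) : v = [] := by
  by_contra hv
  obtain ⟨c, v₁, rfl⟩ : ∃ c v₁, v = c :: v₁ := by
    cases v with
    | nil => exact absurd rfl hv
    | cons c v₁ => exact ⟨c, v₁, rfl⟩
  cases c with
  | true =>
    exact no_bb m (List.IsInfix.trans
      ⟨[], v₁ ++ [false] ++ (true :: v₁) ++ [true], by simp⟩ h)
  | false =>
    obtain ⟨v₀, d, hvd⟩ : ∃ v₀ d, false :: v₁ = v₀ ++ [d] := by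
      rcases List.eq_nil_or_concat (false :: v₁) with h0 | ⟨v₀, d, h0⟩
      · simp at h0
      · exact ⟨v₀, d, by simpa using h0⟩
    cases d with
    | true =>
      refine no_bb m (List.IsInfix.trans ⟨[true] ++ (false :: v₁) ++ [false] ++ v₀, [], ?_⟩ h)
      rw [hvd]; simp
    | false =>
      obtain ⟨x, y, hxy⟩ := h
      rcases List.eq_nil_or_concat x with rfl | ⟨x', e, rfl⟩
      · obtain ⟨t, ht⟩ := fibF_cons m
        rw [ht] at hxy; simp at hxy
      · cases e with
        | true =>
          refine no_bb m ⟨x', (false :: v₁) ++ [false] ++ (false :: v₁) ++ [true] ++ y, ?_⟩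
          rw [← hxy]; simp
        | false =>
          -- interior pattern  a b v a v b
          have hinf : ([false, true] ++ (false :: v₁) ++ [false] ++ (false :: v₁) ++ [true])
              <:+: fibF (m + 1) := mono ⟨x', y, by rw [← hxy]; simp⟩
          obtain ⟨X, Y, hXY⟩ := hinf
          have hXY' : sub (fibF m) =
              X ++ ([false, true] ++ (false :: v₁) ++ [false] ++ (false :: v₁) ++ [true]) ++ Y := by
            rw [sub_fib]; exact hXY.symm
          obtain ⟨T, hT, hsubT⟩ := SYNC (fibF m) X _ Y hXY' rfl
            (by left; simpa using glast ([false, true] ++ (false :: v₁) ++ [false] ++ (false :: v₁)) true)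
          obtain ⟨U1, V1, hT1, hU1, hV1⟩ := SPLIT T [false, true]
            ((false :: v₁) ++ [false] ++ (false :: v₁) ++ [true])
            (by rw [hsubT]; simp) (by left; rfl)
          obtain ⟨U2, V2, hV12, hU2, hV2⟩ := SPLIT V1 ((false :: v₁) ++ [false])
            ((false :: v₁) ++ [true]) (by rw [hV1]; simp) (by left; rfl)
          obtain ⟨r, hr1, hr2⟩ := sub_last_false hU2
          obtain ⟨r2, hr3, hr4⟩ := sub_last_false (z := v₀) (by rw [hr2, hvd])
          -- U2 = r2 ++ [true] ++ [true]
          refine no_bb m (List.IsInfix.trans (List.IsInfix.trans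
            (⟨r2, [], by simp [hr1, hr3]⟩ : [true, true] <:+: U2) ?_) hT)
          exact ⟨U1, V2, by rw [hT1, hV12]; simp⟩

/-- Pattern `a s b s a`: forces `s = []` or `s = [a]`. -/
theorem Qlem (m : ℕ) (s : List Bool)
    (h : ([false] ++ s ++ [true] ++ s ++ [false]) <:+: fibF m) : s = [] ∨ s = [false] := by
  by_cases hs : s = []
  · exact Or.inl hs
  right
  obtain ⟨c, s₁, rfl⟩ : ∃ c s₁, s = c :: s₁ := by
    cases s with
    | nil => exact absurd rfl hs
    | cons c s₁ => exact ⟨c, s₁, rfl⟩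
  cases c with
  | true =>
    exact absurd (List.IsInfix.trans
      ⟨[false] ++ (true :: s₁), s₁ ++ [false], by simp⟩ h) (no_bb m)
  | false =>
    obtain ⟨s₀, d, hsd⟩ : ∃ s₀ d, false :: s₁ = s₀ ++ [d] := by
      rcases List.eq_nil_or_concat (false :: s₁) with h0 | ⟨s₀, d, h0⟩
      · simp at h0
      · exact ⟨s₀, d, by simpa using h0⟩
    cases d with
    | true =>
      exfalso
      refine no_bb m (List.IsInfix.trans
        (⟨[false] ++ s₀, (false :: s₁) ++ [false], ?_⟩ :
          [true, true] <:+: ([false] ++ (false :: s₁) ++ [true] ++ (false :: s₁) ++ [false])) h)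
      rw [hsd]; simp
    | false =>
      obtain ⟨cc, x, y, hxy⟩ := RE h
      cases cc with
      | true =>
        -- pattern ++ [b] : fully synchronizable
        have hXY' : sub (fibF m) =
            x ++ (([false] ++ ((false :: s₁) ++ [true]) ++ ((false :: s₁) ++ [false, true]))) ++ y := by
          rw [sub_fib]; rw [hxy]; simp
        obtain ⟨T, hT, hsubT⟩ := SYNC (fibF m) x _ y hXY' rfl
          (by left; simpa using glast ([false] ++ ((false :: s₁) ++ [true]) ++ ((false :: s₁) ++ [false])) true)
        obtain ⟨U1, V1, hT1, hU1, hV1⟩ := SPLIT T [false]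
          (((false :: s₁) ++ [true]) ++ ((false :: s₁) ++ [false, true]))
          (by rw [hsubT]; simp) (by left; rfl)
        have hU1' : U1 = [true] := sub_inj (by rw [hU1]; rfl)
        obtain ⟨U2, V2, hV12, hU2, hV2⟩ := SPLIT V1 ((false :: s₁) ++ [true])
          ((false :: s₁) ++ [false, true]) (by rw [hV1]) (by left; rfl)
        obtain ⟨r, hr1, hr2⟩ := sub_last_true hU2
        -- s = sub r ++ [false];  V2 = r ++ [true, false]
        have hV2' : V2 = r ++ [true, false] := by
          refine sub_inj (x := V2) (y := r ++ [true, false]) ?_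
          rw [hV2, hr2, sub_append]
          simp [sub]
        -- T = [true] ++ (r ++ [false]) ++ (r ++ [true, false]) ⊇ Q' pattern
        have : ([true] ++ r ++ [false] ++ r ++ [true]) <:+: fibF m := by
          refine List.IsInfix.trans ⟨[], [false], ?_⟩ hT
          rw [hT1, hV12, hU1', hr1, hV2']
          simp
        have hr0 : r = [] := Qp m r this
        rw [hr0] at hr2
        simp [sub] at hr2
        rw [hr2]
      | false =>
        -- next letter a : parse gives bb, contradiction
        exfalso
        have hXY' : sub (fibF m) =
            x ++ ([false] ++ ((false :: s₁) ++ [true]) ++ (false :: s₁) ++ [false]) ++ ([false] ++ y) := by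
          rw [sub_fib]; rw [hxy]; simp
        obtain ⟨T, hT, hsubT⟩ := SYNC (fibF m) x _ ([false] ++ y) hXY' rfl
          (by right; simp)
        obtain ⟨U1, V1, hT1, hU1, hV1⟩ := SPLIT T [false]
          (((false :: s₁) ++ [true]) ++ ((false :: s₁) ++ [false]))
          (by rw [hsubT]; simp) (by left; rfl)
        obtain ⟨U2, V2, hV12, hU2, hV2⟩ := SPLIT V1 ((false :: s₁) ++ [true])
          ((false :: s₁) ++ [false]) (by simpa using hV1) (by left; rfl)
        obtain ⟨U3, V3, hV23, hU3, hV3⟩ := SPLIT V2 (false :: s₁) [false]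
          (by simpa using hV2) (by left; rfl)
        obtain ⟨r, hr1, hr2⟩ := sub_last_true hU2
        -- sub U3 = s = sub r ++ [false] = sub (r ++ [true])
        have hU3' : U3 = r ++ [true] := by
          refine sub_inj ?_
          rw [hU3, hr2, sub_append]
          simp [sub]
        have hV3' : V3 = [true] := sub_inj (by rw [hV3]; rfl)
        -- bb at U3 V3 junction
        refine no_bb m (List.IsInfix.trans (List.IsInfix.trans
          (⟨r, [], by simp [hU3', hV3']⟩ : [true, true] <:+: U3 ++ V3) ?_) hT)
        exact ⟨U1 ++ U2, [], by rw [hT1, hV12, hV23]; simp⟩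

/-- Prefix pattern `z a z b` is impossible for `z ≠ []`. -/
theorem PAlem (m : ℕ) (z : List Bool)
    (h : (z ++ [false] ++ z ++ [true]) <+: fibF m) : z = [] := by
  by_contra hz
  obtain ⟨c, z₁, rfl⟩ : ∃ c z₁, z = c :: z₁ := by
    cases z with
    | nil => exact absurd rfl hz
    | cons c z₁ => exact ⟨c, z₁, rfl⟩
  have hc : c = false := by
    obtain ⟨R, hR⟩ := h
    obtain ⟨t, ht⟩ := fibF_cons m
    rw [ht] at hR
    simpa using congrArg List.head? hR
  subst hc
  obtain ⟨z₀, d, hzd⟩ : ∃ z₀ d, false :: z₁ = z₀ ++ [d] := by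
    rcases List.eq_nil_or_concat (false :: z₁) with h0 | ⟨z₀, d, h0⟩
    · simp at h0
    · exact ⟨z₀, d, by simpa using h0⟩
  cases d with
  | true =>
    refine no_bb m (List.IsInfix.trans
      (⟨(false :: z₁) ++ [false] ++ z₀, [], ?_⟩ :
        [true, true] <:+: ((false :: z₁) ++ [false] ++ (false :: z₁) ++ [true])) h.isInfix)
    rw [hzd]; simp
  | false =>
    obtain ⟨R, hR⟩ := mono_prefix h
    have hs : sub (fibF m) = ((false :: z₁) ++ [false] ++ (false :: z₁) ++ [true]) ++ R := by
      rw [sub_fib]; exact hR.symm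
    obtain ⟨T, R', hTR, hsubT⟩ := SP (fibF m) _ R hs (by simp)
      (by left; simpa using glast ((false :: z₁) ++ [false] ++ (false :: z₁)) true)
    obtain ⟨U1, V1, hT1, hU1, hV1⟩ := SPLIT T (false :: z₁)
      ([false] ++ (false :: z₁) ++ [true]) (by rw [hsubT]; simp) (by left; rfl)
    obtain ⟨r, hr1, hr2⟩ := sub_last_false (z := z₀) (by rw [hU1, hzd])
    obtain ⟨U2, V2, hV12, hU2, hV2⟩ := SPLIT V1 [false] ((false :: z₁) ++ [true])
      (by simpa using hV1) (by left; rfl)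
    have hU2' : U2 = [true] := sub_inj (by rw [hU2]; rfl)
    refine no_bb m ⟨r, V2 ++ R', ?_⟩
    rw [hTR, hT1, hV12, hU2', hr1]
    simp

/-- Prefix pattern `s b s a` forces `s = [a]`. -/
theorem PBlem (m : ℕ) (s : List Bool)
    (h : (s ++ [true] ++ s ++ [false]) <+: fibF m) : s = [false] := by
  obtain ⟨t, ht⟩ := fibF_cons m
  cases s with
  | nil =>
    exfalso
    obtain ⟨R, hR⟩ := h
    rw [ht] at hR
    simpa using congrArg List.head? hR
  | cons c s₁ =>
  have hc : c = false := by
    obtain ⟨R, hR⟩ := h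
    rw [ht] at hR
    simpa using congrArg List.head? hR
  subst hc
  obtain ⟨s₀, d, hsd⟩ : ∃ s₀ d, false :: s₁ = s₀ ++ [d] := by
    rcases List.eq_nil_or_concat (false :: s₁) with h0 | ⟨s₀, d, h0⟩
    · simp at h0
    · exact ⟨s₀, d, by simpa using h0⟩
  cases d with
  | true =>
    exfalso
    refine no_bb m (List.IsInfix.trans
      (⟨s₀, (false :: s₁) ++ [false], ?_⟩ :
        [true, true] <:+: ((false :: s₁) ++ [true] ++ (false :: s₁) ++ [false])) h.isInfix)
    rw [hsd]; simp
  | false =>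
    obtain ⟨y, hy⟩ := mono_prefix h
    by_cases hy0 : y.head? = some true
    · -- fully synchronized case, reduces to PA
      obtain ⟨y'', rfl⟩ : ∃ y'', y = true :: y'' := by
        cases y with
        | nil => simp at hy0
        | cons yc y'' => exact ⟨y'', by rw [show yc = true by simpa using hy0]⟩
      have hs : sub (fibF m) =
          ((false :: s₁) ++ [true] ++ ((false :: s₁) ++ [false, true])) ++ y'' := by
        rw [sub_fib, ← hy]; simp
      obtain ⟨T, R', hTR, hsubT⟩ := SP (fibF m) _ y'' hs (by simp)
        (by left; simpa using glast ((false :: s₁) ++ [true] ++ (false :: s₁) ++ [false]) true)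
      obtain ⟨U1, V1, hT1, hU1, hV1⟩ := SPLIT T ((false :: s₁) ++ [true])
        ((false :: s₁) ++ [false, true]) (by simpa using hsubT) (by left; rfl)
      obtain ⟨r, hr1, hr2⟩ := sub_last_true hU1
      have hV1' : V1 = r ++ [true, false] := by
        refine sub_inj ?_
        rw [hV1, hr2, sub_append]
        simp [sub]
      have hPA : (r ++ [false] ++ r ++ [true]) <+: fibF m := by
        refine ⟨[false] ++ R', ?_⟩
        rw [hTR, hT1, hr1, hV1']
        simp
      have hr0 : r = [] := PAlem m r hPA
      rw [hr0] at hr2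
      simp [sub] at hr2
      rw [hr2]
    · exfalso
      have hs : sub (fibF m) =
          ((false :: s₁) ++ [true] ++ (false :: s₁) ++ [false]) ++ y := by
        rw [sub_fib, ← hy]
      obtain ⟨T, R', hTR, hsubT⟩ := SP (fibF m) _ y hs (by simp) (by right; exact hy0)
      obtain ⟨U1, V1, hT1, hU1, hV1⟩ := SPLIT T ((false :: s₁) ++ [true])
        ((false :: s₁) ++ [false]) (by simpa using hsubT) (by left; rfl)
      obtain ⟨U2, V2, hV12, hU2, hV2⟩ := SPLIT V1 (false :: s₁) [false]
        (by simpa using hV1) (by left; rfl)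
      obtain ⟨r, hr1, hr2⟩ := sub_last_true hU1
      have hU2' : U2 = r ++ [true] := by
        refine sub_inj ?_
        rw [hU2, hr2, sub_append]
        simp [sub]
      have hV2' : V2 = [true] := sub_inj (by rw [hV2]; rfl)
      refine no_bb m ⟨U1 ++ r, R', ?_⟩
      rw [hTR, hT1, hV12, hU2', hV2']
      simp

/-- The good desubstitution step for squares. -/
theorem GOOD (m : ℕ) (w x y : List Bool) (hw : fibF (m + 1) = x ++ (w ++ w) ++ y)
    (h1 : w.head? = some false) (h2 : true ∈ w)
    (h3 : w.getLast? = some true ∨ y.head? ≠ some true) :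
    ∃ V, sub V = w ∧ V ≠ [] ∧ V.length < w.length ∧ IsFactorF (V ++ V) := by
  obtain ⟨w₁, rfl⟩ : ∃ w₁, w = false :: w₁ := by
    cases w with
    | nil => simp at h1
    | cons c w₁ => exact ⟨w₁, by rw [show c = false by simpa using h1]⟩
  have hs : sub (fibF m) = x ++ ((false :: w₁) ++ (false :: w₁)) ++ y := by
    rw [sub_fib]; exact hw
  have hcond : ((false :: w₁) ++ (false :: w₁)).getLast? = some true ∨ y.head? ≠ some true := by
    rcases h3 with h3 | h3
    · left
      obtain ⟨w₀, d, hwd⟩ : ∃ w₀ d, false :: w₁ = w₀ ++ [d] := by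
        rcases List.eq_nil_or_concat (false :: w₁) with h0 | ⟨w₀, d, h0⟩
        · simp at h0
        · exact ⟨w₀, d, by simpa using h0⟩
      have hd : d = true := by
        rw [hwd, glast] at h3; simpa using h3
      rw [hwd, hd]
      simpa using glast ((w₀ ++ [true]) ++ w₀) true
    · right; exact h3
  obtain ⟨T, hT, hsubT⟩ := SYNC (fibF m) x _ y hs rfl hcond
  obtain ⟨U, V, hUV, hsU, hsV⟩ := SPLIT T (false :: w₁) (false :: w₁) hsubT (by left; rfl)
  have hUVeq : U = V := sub_inj (by rw [hsU, hsV])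
  refine ⟨V, hsV, ?_, ?_, ⟨m, ?_⟩⟩
  · intro h0; rw [h0] at hsV; simp [sub] at hsV
  · have := sub_len_lt V (by rw [hsV]; exact h2)
    rwa [hsV] at this
  · rw [hUVeq] at hUV
    rw [← hUV]
    exact hT

theorem rot_sub {x y : List Bool} (h : x ~r y) : sub x ~r sub y := by
  obtain ⟨p, q, rfl, rfl⟩ := rot_exists h
  rw [sub_append, sub_append]
  exact List.isRotated_append

theorem fibF2_eq : fibF 2 = [false, true, false] := rfl

/-- Main case: square with root starting with `a`, length ≥ 3. -/
theorem HA (w : List Bool)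
    (IH : ∀ v : List Bool, v.length < w.length → v ≠ [] → IsFactorF (v ++ v) → ∃ n, v ~r fibF n)
    (h1 : w.head? = some false) (h3 : 3 ≤ w.length) (hf : IsFactorF (w ++ w)) :
    ∃ n, w ~r fibF n := by
  obtain ⟨w₁, rfl⟩ : ∃ w₁, w = false :: w₁ := by
    cases w with
    | nil => simp at h1
    | cons c w₁ => exact ⟨w₁, by rw [show c = false by simpa using h1]⟩
  obtain ⟨m0, hm0⟩ := hf
  obtain ⟨x, y, hxy⟩ := mono hm0
  have hw : fibF (m0 + 1) = x ++ ((false :: w₁) ++ (false :: w₁)) ++ y := hxy.symm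
  -- the root contains the letter b
  have htw : true ∈ (false :: w₁) := by
    by_contra hall
    rcases w₁ with _ | ⟨c2, w₂⟩
    · simp at h3
    rcases w₂ with _ | ⟨c3, w₃⟩
    · simp at h3
    have hc2 : c2 = false := by cases c2; rfl; exact absurd (by simp) hall
    have hc3 : c3 = false := by cases c3; rfl; exact absurd (by simp) hall
    subst hc2; subst hc3
    refine no_aaa (m0 + 1) (List.IsInfix.trans ⟨[], w₃ ++ (false :: false :: false :: w₃), ?_⟩
      (⟨x, y, by rw [hw]⟩ : ((false :: false :: false :: w₃) ++ (false :: false :: false :: w₃)) <:+: fibF (m0 + 1)))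
    simp
  -- split on the last letter of w
  obtain ⟨w₀, d, hwd⟩ : ∃ w₀ d, false :: w₁ = w₀ ++ [d] := by
    rcases List.eq_nil_or_concat (false :: w₁) with h0 | ⟨w₀, d, h0⟩
    · simp at h0
    · exact ⟨w₀, d, by simpa using h0⟩
  cases d with
  | true =>
    obtain ⟨V, hsV, hVne, hVlt, hVf⟩ := GOOD m0 (false :: w₁) x y hw rfl htw
      (by left; rw [hwd]; exact glast _ _)
    obtain ⟨n, hrot⟩ := IH V hVlt hVne hVf
    exact ⟨n + 1, by rw [← sub_fib n, ← hsV]; exact rot_sub hrot⟩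
  | false =>
    by_cases hy0 : y.head? = some true
    case neg =>
      obtain ⟨V, hsV, hVne, hVlt, hVf⟩ := GOOD m0 (false :: w₁) x y hw rfl htw (by right; exact hy0)
      obtain ⟨n, hrot⟩ := IH V hVlt hVne hVf
      exact ⟨n + 1, by rw [← sub_fib n, ← hsV]; exact rot_sub hrot⟩
    case pos =>
      obtain ⟨y', rfl⟩ : ∃ y', y = true :: y' := by
        cases y with
        | nil => simp at hy0
        | cons yc y' => exact ⟨y', by rw [show yc = true by simpa using hy0]⟩
      rcases List.eq_nil_or_concat x with rfl | ⟨x', e, rfl⟩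
      · -- prefix case : PB reduction
        have hs : sub (fibF m0) =
            ((false :: w₁) ++ ((false :: w₁) ++ [true])) ++ y' := by
          rw [sub_fib, hw]; simp
        obtain ⟨T, R', hTR, hsubT⟩ := SP (fibF m0) _ y' hs (by simp)
          (by left; simpa using glast ((false :: w₁) ++ (false :: w₁)) true)
        obtain ⟨U1, V1, hT1, hU1, hV1⟩ := SPLIT T (false :: w₁) ((false :: w₁) ++ [true])
          (by simpa using hsubT) (by left; rfl)
        obtain ⟨r, hr1, hr2⟩ := sub_last_false (z := w₀) (by rw [hU1, hwd])
        have hV1' : V1 = r ++ [false] := by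
          refine sub_inj ?_
          rw [hV1, sub_append, hwd, ← hr2]
          simp [sub]
        have hPB : (r ++ [true] ++ r ++ [false]) <+: fibF m0 :=
          ⟨R', by rw [hTR, hT1, hr1, hV1']; simp⟩
        have hr0 : r = [false] := PBlem m0 r hPB
        refine ⟨2, ?_⟩
        rw [show (false :: w₁) = [false, true, false] by
          rw [hwd, ← hr2, hr0]; simp [sub], fibF2_eq]
      · cases e with
        | false =>
          -- rotate left, then GOOD
          have hw' : fibF (m0 + 1) =
              x' ++ ((false :: w₀) ++ (false :: w₀)) ++ ([false] ++ (true :: y')) := by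
            rw [hw, hwd]; simp
          have htw' : true ∈ w₀ := by
            rw [hwd] at htw; simpa using htw
          obtain ⟨V, hsV, hVne, hVlt, hVf⟩ := GOOD m0 (false :: w₀) x' ([false] ++ (true :: y'))
            hw' rfl (List.mem_cons_of_mem _ htw') (by right; simp)
          have hlen : (false :: w₀).length = (false :: w₁).length := by
            have := congrArg List.length hwd
            simp at this ⊢
            omega
          obtain ⟨n, hrot⟩ := IH V (by rw [← hlen]; exact hVlt) hVne hVf
          have hr1 : (false :: w₁) ~r (false :: w₀) := by
            rw [hwd]
            exact (show (w₀ ++ [false]) ~r ([false] ++ w₀) from List.isRotated_append)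
          have hr2 : (false :: w₀) ~r fibF (n + 1) := by
            rw [← sub_fib n, ← hsV]; exact rot_sub hrot
          exact ⟨n + 1, hr1.trans hr2⟩
        | true =>
          -- interior Q reduction
          rcases List.eq_nil_or_concat x' with rfl | ⟨x'', e2, rfl⟩
          · exfalso
            obtain ⟨t, ht⟩ := fibF_cons (m0 + 1)
            rw [ht] at hw
            simpa using congrArg List.head? hw
          cases e2 with
          | true =>
            exact absurd ⟨x'', (false :: w₁) ++ (false :: w₁) ++ (true :: y'),
              by rw [hw]; simp⟩ (no_bb (m0 + 1))
          | false =>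
            have hs : sub (fibF m0) =
                x'' ++ ([false, true] ++ ((false :: w₁) ++ ((false :: w₁) ++ [true]))) ++ y' := by
              rw [sub_fib, hw]; simp
            obtain ⟨T, hT, hsubT⟩ := SYNC (fibF m0) x'' _ y' hs rfl
              (by left; simpa using glast ([false, true] ++ (false :: w₁) ++ (false :: w₁)) true)
            obtain ⟨U0, V0, hT0, hU0, hV0⟩ := SPLIT T [false, true]
              ((false :: w₁) ++ ((false :: w₁) ++ [true])) (by simpa using hsubT) (by left; rfl)
            have hU0' : U0 = [false] := sub_inj (by rw [hU0]; rfl)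
            obtain ⟨U1, V1, hT1, hU1, hV1⟩ := SPLIT V0 (false :: w₁) ((false :: w₁) ++ [true])
              (by simpa using hV0) (by left; rfl)
            obtain ⟨r, hr1, hr2⟩ := sub_last_false (z := w₀) (by rw [hU1, hwd])
            have hV1' : V1 = r ++ [false] := by
              refine sub_inj ?_
              rw [hV1, sub_append, hwd, ← hr2]
              simp [sub]
            have hQ : ([false] ++ r ++ [true] ++ r ++ [false]) <:+: fibF m0 := by
              refine List.IsInfix.trans ⟨[], [], ?_⟩ hT
              rw [hT0, hT1, hU0', hr1, hV1']
              simp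
            rcases Qlem m0 r hQ with hr0 | hr0
            · exfalso
              rw [hr0] at hr2
              have hw0 : w₀ = [] := by simpa [sub] using hr2.symm
              rw [hw0] at hwd
              have := congrArg List.length hwd
              simp at this
              rw [show w₁ = [] by simpa using hwd] at h3
              simp at h3
            · refine ⟨2, ?_⟩
              rw [show (false :: w₁) = [false, true, false] by
                rw [hwd, ← hr2, hr0]; simp [sub], fibF2_eq]

theorem MAIN : ∀ w : List Bool, w ≠ [] → IsFactorF (w ++ w) → ∃ n, w ~r fibF n := by
  have H : ∀ N (w : List Bool), w.length ≤ N → w ≠ [] → IsFactorF (w ++ w) →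
      ∃ n, w ~r fibF n := by
    intro N
    induction N with
    | zero =>
      intro w hl hne _
      exact absurd (List.length_eq_zero_iff.mp (Nat.le_zero.mp hl)) hne
    | succ N ihN =>
      intro w hl hne hf
      rcases w with _ | ⟨c1, w1⟩
      · exact absurd rfl hne
      rcases w1 with _ | ⟨c2, w2⟩
      · -- length 1
        cases c1 with
        | true =>
          obtain ⟨m, hm⟩ := hf
          exact absurd hm (no_bb m)
        | false => exact ⟨0, ⟨0, by decide⟩⟩
      rcases w2 with _ | ⟨c3, w3⟩
      · -- length 2
        cases c1 <;> cases c2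
        · -- [false, false] : aaaa contains aaa
          obtain ⟨m, hm⟩ := hf
          exact absurd (List.IsInfix.trans ⟨[], [false], by decide⟩ hm) (no_aaa m)
        · exact ⟨1, ⟨0, by decide⟩⟩
        · exact ⟨1, ⟨1, by decide⟩⟩
        · obtain ⟨m, hm⟩ := hf
          exact absurd (List.IsInfix.trans ⟨[], [true, true], by decide⟩ hm) (no_bb m)
      -- length ≥ 3
      have h3 : 3 ≤ (c1 :: c2 :: c3 :: w3).length := by simp
      have IH' : ∀ v : List Bool, v.length < (c1 :: c2 :: c3 :: w3).length → v ≠ [] →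
          IsFactorF (v ++ v) → ∃ n, v ~r fibF n := by
        intro v hv hvne hvf
        exact ihN v (by simp at hv hl ⊢; omega) hvne hvf
      cases c1 with
      | false => exact HA _ IH' rfl h3 hf
      | true =>
        -- rotate to start with a
        obtain ⟨w₀, d, hwd⟩ : ∃ w₀ d, (true :: c2 :: c3 :: w3) = w₀ ++ [d] := by
          rcases List.eq_nil_or_concat (true :: c2 :: c3 :: w3) with h0 | ⟨w₀, d, h0⟩
          · simp at h0
          · exact ⟨w₀, d, by simpa using h0⟩
        cases d with
        | true =>
          obtain ⟨m, hm⟩ := hf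
          refine absurd (List.IsInfix.trans ⟨w₀, c2 :: c3 :: w3, ?_⟩ hm) (no_bb m)
          conv_rhs => rw [show (true :: c2 :: c3 :: w3) ++ (true :: c2 :: c3 :: w3)
            = (w₀ ++ [true]) ++ (true :: c2 :: c3 :: w3) by rw [← hwd]]
          simp
        | false =>
          obtain ⟨m0, hm0⟩ := hf
          obtain ⟨x, y, hxy⟩ := mono hm0
          have hw : fibF (m0 + 1) = x ++ ((true :: c2 :: c3 :: w3) ++ (true :: c2 :: c3 :: w3)) ++ y :=
            hxy.symm
          rcases List.eq_nil_or_concat x with rfl | ⟨x', e, rfl⟩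
          · exfalso
            obtain ⟨t, ht⟩ := fibF_cons (m0 + 1)
            rw [ht] at hw
            simpa using congrArg List.head? hw
          cases e with
          | true =>
            refine absurd (⟨x', (c2 :: c3 :: w3) ++ (true :: c2 :: c3 :: w3) ++ y, ?_⟩ :
              [true, true] <:+: fibF (m0 + 1)) (no_bb (m0 + 1))
            rw [hw]; simp
          | false =>
            have hwsq : fibF (m0 + 1) =
                x' ++ ((false :: w₀) ++ (false :: w₀)) ++ ([false] ++ y) := by
              rw [hw, hwd]; simp
            have hlen : (false :: w₀).length = (true :: c2 :: c3 :: w3).length := by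
              have := congrArg List.length hwd
              simp at this ⊢
              omega
            have IH'' : ∀ v : List Bool, v.length < (false :: w₀).length → v ≠ [] →
                IsFactorF (v ++ v) → ∃ n, v ~r fibF n := by
              intro v hv hvne hvf
              refine IH' v ?_ hvne hvf
              rw [← hlen]; exact hv
            obtain ⟨n, hr⟩ := HA (false :: w₀) IH'' rfl
              (by rw [hlen]; exact h3) ⟨m0 + 1, ⟨x', [false] ++ y, by rw [hwsq]⟩⟩
            refine ⟨n, List.IsRotated.trans ?_ hr⟩
            rw [hwd]
            exact (show (w₀ ++ [false]) ~r ([false] ++ w₀) from List.isRotated_append)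
  exact fun w => H w.length w le_rfl

theorem fibF_length : ∀ m, (fibF m).length = Nat.fib (m + 2)
  | 0 => rfl
  | 1 => rfl
  | (m + 2) => by
      show (fibF (m + 1) ++ fibF m).length = Nat.fib (m + 4)
      rw [List.length_append, fibF_length (m + 1), fibF_length m]
      have h4 : Nat.fib (m + 4) = Nat.fib (m + 2) + Nat.fib (m + 3) := Nat.fib_add_two
      have h5 : Nat.fib (m + 1 + 2) = Nat.fib (m + 3) := rfl
      omega

theorem rot_len {l l' : List Bool} (h : l ~r l') : l.length = l'.length := by
  obtain ⟨n, hn⟩ := h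
  rw [← hn, List.length_rotate]

end FibSq

/-- (`f_m = Nat.fib (m + 2)`, so `f_m` for `m ≥ 0` is `Nat.fib (k + 2)`, `k : ℕ`.)
If `ww` is a square factor of `𝔽` then `|w| = f_m` for some `m ≥ 0`, and
conversely every such length is realized by a square factor. -/
theorem stmt_9 :
    (∀ w : List Bool, w ≠ [] → IsFactorF (w ++ w) →
      ∃ k : ℕ, w.length = Nat.fib (k + 2)) ∧
    (∀ k : ℕ, ∃ w : List Bool, w ≠ [] ∧ w.length = Nat.fib (k + 2) ∧
      IsFactorF (w ++ w)) := by
  constructor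
  · intro w hne hf
    obtain ⟨n, hr⟩ := FibSq.MAIN w hne hf
    exact ⟨n, by rw [FibSq.rot_len hr, FibSq.fibF_length]⟩
  · intro k
    cases k with
    | zero =>
      exact ⟨[false], by simp, by decide, ⟨3, ⟨[false, true], [true], by decide⟩⟩⟩
    | succ j =>
      refine ⟨fibF (j + 1), FibSq.fibF_ne_nil _, FibSq.fibF_length (j + 1),
        ⟨j + 4, ⟨fibF (j + 2), fibF j, ?_⟩⟩⟩
      rw [show fibF (j + 4) = fibF (j + 3) ++ fibF (j + 2) from rfl,
        show fibF (j + 3) = fibF (j + 2) ++ fibF (j + 1) from rfl,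
        show fibF (j + 2) = fibF (j + 1) ++ fibF j from rfl]
      simp
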